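/- Let n ≥ 1, let e_1,…,e_n be the standard basis of ℝ^n, and for S ⊆ {1,…,n} let F_S = conv({0} ∪ {e_i : i ∈ S}). Then for any positive reals μ, ν and any subset S with |S| = i, the Lebesgue measure of μ F_S + ν·(−F_{S^c}) in ℝ^n equals μ^i · ν^{n−i} / (i! · (n−i)!). -/

import Mathlib

open Pointwise MeasureTheory

section Aux

lemma aux_simplex_measurable (ι : Type*) [Fintype ι] (t : ℝ) :
    MeasurableSet {x : ι → ℝ | (∀ i, 0 ≤ x i) ∧ ∑ i, x i ≤ t} := by
  have h1 : MeasurableSet {x : ι → ℝ | ∀ i, 0 ≤ x i} := by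
    have : {x : ι → ℝ | ∀ i, 0 ≤ x i} = ⋂ i, {x : ι → ℝ | 0 ≤ x i} := by
      ext x; simp
    rw [this]
    exact MeasurableSet.iInter fun i =>
      measurableSet_le measurable_const (measurable_pi_apply i)
  have h2 : MeasurableSet {x : ι → ℝ | ∑ i, x i ≤ t} :=
    measurableSet_le (Finset.measurable_sum _ fun i _ => measurable_pi_apply i)
      measurable_const
  exact h1.inter h2

lemma prod_aux_simplex_measurable (n : ℕ) (t : ℝ) :
    MeasurableSet {p : ℝ × (Fin n → ℝ) |
        (0 ≤ p.1 ∧ (∀ j, 0 ≤ p.2 j)) ∧ p.1 + ∑ j, p.2 j ≤ t} := by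
  have h1 : MeasurableSet {p : ℝ × (Fin n → ℝ) | 0 ≤ p.1} :=
    measurableSet_le measurable_const measurable_fst
  have h2 : MeasurableSet {p : ℝ × (Fin n → ℝ) | ∀ j, 0 ≤ p.2 j} := by
    have : {p : ℝ × (Fin n → ℝ) | ∀ j, 0 ≤ p.2 j} =
        ⋂ j, {p : ℝ × (Fin n → ℝ) | 0 ≤ p.2 j} := by ext p; simp
    rw [this]
    refine MeasurableSet.iInter fun j => measurableSet_le measurable_const ?_
    exact (measurable_pi_apply j).comp measurable_snd
  have h3 : MeasurableSet {p : ℝ × (Fin n → ℝ) | p.1 + ∑ j, p.2 j ≤ t} := by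
    refine measurableSet_le (measurable_fst.add ?_) measurable_const
    exact Finset.measurable_sum _ fun j _ => (measurable_pi_apply j).comp measurable_snd
  exact (h1.inter h2).inter h3

lemma slice_eq (n : ℕ) (t a : ℝ) :
    (fun y : Fin n → ℝ => (a, y)) ⁻¹' {p : ℝ × (Fin n → ℝ) |
        (0 ≤ p.1 ∧ (∀ j, 0 ≤ p.2 j)) ∧ p.1 + ∑ j, p.2 j ≤ t} =
      if 0 ≤ a then {y : Fin n → ℝ | (∀ j, 0 ≤ y j) ∧ ∑ j, y j ≤ t - a} else ∅ := by
  split_ifs with h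
  · ext y; simp only [Set.mem_preimage, Set.mem_setOf_eq]
    constructor
    · rintro ⟨⟨_, h1⟩, h2⟩; exact ⟨h1, by linarith⟩
    · rintro ⟨h1, h2⟩; exact ⟨⟨h, h1⟩, by linarith⟩
  · ext y; simp only [Set.mem_preimage, Set.mem_setOf_eq, Set.mem_empty_iff_false, iff_false]
    rintro ⟨⟨h0, _⟩, _⟩; exact h h0

lemma aux_simplex_volume_fin (n : ℕ) : ∀ t : ℝ, 0 ≤ t →
    volume {x : Fin n → ℝ | (∀ i, 0 ≤ x i) ∧ ∑ i, x i ≤ t} =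
      ENNReal.ofReal (t ^ n / n.factorial) := by
  induction n with
  | zero =>
    intro t ht
    have h : {x : Fin 0 → ℝ | (∀ i, 0 ≤ x i) ∧ ∑ i, x i ≤ t} = Set.univ := by
      ext x
      simp only [Set.mem_setOf_eq, Set.mem_univ, iff_true]
      exact ⟨fun i => i.elim0, by simpa using ht⟩
    rw [h]
    simp [MeasureTheory.volume_pi, Measure.pi_univ]
  | succ n ih =>
    intro t ht
    set B : Set (ℝ × (Fin n → ℝ)) :=
      {p | (0 ≤ p.1 ∧ (∀ j, 0 ≤ p.2 j)) ∧ p.1 + ∑ j, p.2 j ≤ t} with hBdef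
    have hkey : ∀ x : Fin (n+1) → ℝ,
        (MeasurableEquiv.piFinSuccAbove (fun _ => ℝ) 0) x = (x 0, fun j => x j.succ) := by
      intro x
      simp [MeasurableEquiv.piFinSuccAbove, Fin.removeNth_zero, Fin.tail]
      rfl
    have hpre : {x : Fin (n+1) → ℝ | (∀ i, 0 ≤ x i) ∧ ∑ i, x i ≤ t} =
        (MeasurableEquiv.piFinSuccAbove (fun _ => ℝ) 0) ⁻¹' B := by
      ext x
      simp only [Set.mem_preimage, hkey x, hBdef, Set.mem_setOf_eq, Fin.forall_fin_succ,
        Fin.sum_univ_succ]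
    rw [hpre,
      (volume_preserving_piFinSuccAbove (fun _ : Fin (n+1) => ℝ) 0).measure_preimage
        (prod_aux_simplex_measurable n t).nullMeasurableSet]
    have : (volume : Measure (ℝ × (Fin n → ℝ))) B =
        ∫⁻ a, volume ((fun y : Fin n → ℝ => (a, y)) ⁻¹' B) := by
      have := MeasureTheory.Measure.prod_apply (μ := (volume : Measure ℝ))
        (ν := (volume : Measure (Fin n → ℝ))) (prod_aux_simplex_measurable n t)
      rw [Measure.volume_eq_prod]; exact this
    rw [this]
    have hsl : ∀ a : ℝ, volume ((fun y : Fin n → ℝ => (a, y)) ⁻¹' B) =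
        Set.indicator (Set.Icc 0 t) (fun a => ENNReal.ofReal ((t - a) ^ n / n.factorial)) a := by
      intro a
      rw [slice_eq n t a]
      by_cases h0 : 0 ≤ a
      · by_cases h1 : a ≤ t
        · rw [if_pos h0, ih (t - a) (by linarith), Set.indicator_of_mem (Set.mem_Icc.mpr ⟨h0, h1⟩)]
        · rw [if_pos h0, Set.indicator_of_notMem (by simp [h1])]
          have : {y : Fin n → ℝ | (∀ j, 0 ≤ y j) ∧ ∑ j, y j ≤ t - a} = ∅ := by
            ext y
            simp only [Set.mem_setOf_eq, Set.mem_empty_iff_false, iff_false]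
            rintro ⟨hy, hs⟩
            have : (0:ℝ) ≤ ∑ j, y j := Finset.sum_nonneg fun j _ => hy j
            linarith [lt_of_not_ge h1]
          simp [this]
      · rw [if_neg h0, Set.indicator_of_notMem (by simp [h0])]
        simp
    simp_rw [hsl]
    rw [lintegral_indicator measurableSet_Icc]
    rw [← MeasureTheory.ofReal_integral_eq_lintegral_ofReal]
    · congr 1
      rw [MeasureTheory.integral_Icc_eq_integral_Ioc, ← intervalIntegral.integral_of_le ht]
      rw [intervalIntegral.integral_comp_sub_left (fun y : ℝ => y ^ n / (n.factorial : ℝ)) t]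
      simp only [sub_zero, sub_self]
      rw [intervalIntegral.integral_div, integral_pow]
      rw [Nat.factorial_succ]
      push_cast
      field_simp
      simp
    · apply Continuous.integrableOn_Icc
      continuity
    · refine (ae_restrict_iff' measurableSet_Icc).mpr (ae_of_all _ fun a ha => ?_)
      have : 0 ≤ t - a := by linarith [ha.2]
      positivity

lemma aux_simplex_volume (ι : Type*) [Fintype ι] (t : ℝ) (ht : 0 ≤ t) :
    volume {x : ι → ℝ | (∀ i, 0 ≤ x i) ∧ ∑ i, x i ≤ t} =
      ENNReal.ofReal (t ^ Fintype.card ι / (Fintype.card ι).factorial) := by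
  classical
  set f : Fin (Fintype.card ι) ≃ ι := (Fintype.equivFin ι).symm
  set e := MeasurableEquiv.piCongrLeft (fun _ : ι => ℝ) f
  have hpre : e ⁻¹' {x : ι → ℝ | (∀ i, 0 ≤ x i) ∧ ∑ i, x i ≤ t} =
      {y : Fin (Fintype.card ι) → ℝ | (∀ i, 0 ≤ y i) ∧ ∑ i, y i ≤ t} := by
    ext y
    have he : ∀ i, e y i = y (f.symm i) := by
      intro i
      simp [e, MeasurableEquiv.coe_piCongrLeft, Equiv.piCongrLeft_apply_eq_cast]
    simp only [Set.mem_preimage, Set.mem_setOf_eq]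
    constructor
    · rintro ⟨h1, h2⟩
      refine ⟨fun i => by simpa [he] using h1 (f i), ?_⟩
      calc ∑ i, y i = ∑ i, e y i := by
            rw [← Equiv.sum_comp f (fun i => e y i)]
            simp [he]
          _ ≤ t := h2
    · rintro ⟨h1, h2⟩
      refine ⟨fun i => by rw [he]; exact h1 _, ?_⟩
      calc ∑ i, e y i = ∑ i, y i := by
            rw [← Equiv.sum_comp f (fun i => e y i)]
            simp [he]
          _ ≤ t := h2
  rw [← (volume_measurePreserving_piCongrLeft (fun _ : ι => ℝ) f).measure_preimage
      (aux_simplex_measurable ι t).nullMeasurableSet, hpre, aux_simplex_volume_fin _ t ht]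

lemma aux_face_eq (n : ℕ) (S : Finset (Fin n)) :
    convexHull ℝ ({0} ∪ {x : EuclideanSpace ℝ (Fin n) | ∃ j ∈ S, x = EuclideanSpace.single j (1:ℝ)}) =
      {x : EuclideanSpace ℝ (Fin n) |
        (∀ j, 0 ≤ x j) ∧ (∀ j ∉ S, x j = 0) ∧ ∑ j ∈ S, x j ≤ 1} := by
  classical
  apply le_antisymm
  · apply convexHull_min
    · rintro x (rfl | ⟨j, hj, rfl⟩)
      · refine ⟨fun j => le_refl 0, fun j _ => rfl, by simp⟩
      · refine ⟨fun k => ?_, fun k hk => ?_, ?_⟩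
        · rw [EuclideanSpace.single_apply]; positivity
        · rw [EuclideanSpace.single_apply, if_neg]; rintro rfl; exact hk hj
        · simp only [EuclideanSpace.single_apply]
          rw [Finset.sum_ite_eq' S j (fun _ => (1:ℝ)), if_pos hj]
    · rintro x ⟨hx1, hx2, hx3⟩ y ⟨hy1, hy2, hy3⟩ a b ha hb hab
      have happ : ∀ k, (a • x + b • y) k = a * x k + b * y k := by
        intro k; simp [PiLp.add_apply, PiLp.smul_apply, smul_eq_mul]
      refine ⟨fun k => ?_, fun k hk => ?_, ?_⟩
      · rw [happ]; have := hx1 k; have := hy1 k; positivity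
      · rw [happ, hx2 k hk, hy2 k hk]; ring
      · calc ∑ j ∈ S, (a • x + b • y) j = a * ∑ j ∈ S, x j + b * ∑ j ∈ S, y j := by
              simp only [happ, Finset.mul_sum, Finset.sum_add_distrib]
            _ ≤ a * 1 + b * 1 := by
              gcongr
            _ = 1 := by linarith
  · rintro x ⟨hx1, hx2, hx3⟩
    set c := ∑ j ∈ S, x j with hc
    have hc0 : 0 ≤ c := Finset.sum_nonneg fun j _ => hx1 j
    have hxsum : x = ∑ j ∈ S, x j • EuclideanSpace.single j (1:ℝ) := by
      ext k
      have : (∑ j ∈ S, x j • EuclideanSpace.single j (1:ℝ)) k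
          = ∑ j ∈ S, x j * (if k = j then (1:ℝ) else 0) := by
        rw [WithLp.ofLp_sum, Finset.sum_apply]
        simp [EuclideanSpace.single_apply, PiLp.smul_apply, smul_eq_mul]
      rw [this]
      by_cases hk : k ∈ S
      · rw [Finset.sum_eq_single k (fun j _ hj => by rw [if_neg (Ne.symm hj), mul_zero])
          (fun h => absurd hk h)]
        simp
      · rw [hx2 k hk]
        symm
        apply Finset.sum_eq_zero
        intro j hj
        rw [if_neg, mul_zero]
        rintro rfl; exact hk hj
    rcases eq_or_lt_of_le hc0 with hczero | hcpos
    · have hx0 : x = 0 := by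
        ext k
        by_cases hk : k ∈ S
        · exact (Finset.sum_eq_zero_iff_of_nonneg fun j _ => hx1 j).mp hczero.symm k hk
        · exact hx2 k hk
      rw [hx0]
      exact subset_convexHull ℝ _ (Or.inl rfl)
    · have hS : S.Nonempty := by
        by_contra h
        rw [Finset.not_nonempty_iff_eq_empty] at h
        simp [hc, h] at hcpos
      have hPne : {x : EuclideanSpace ℝ (Fin n) | ∃ j ∈ S, x = EuclideanSpace.single j (1:ℝ)}.Nonempty :=
        ⟨EuclideanSpace.single hS.choose 1, hS.choose, hS.choose_spec, rfl⟩
      rw [Set.singleton_union, convexHull_insert hPne]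
      have hy : S.centerMass x (fun j => EuclideanSpace.single j (1:ℝ)) ∈
          convexHull ℝ {x : EuclideanSpace ℝ (Fin n) | ∃ j ∈ S, x = EuclideanSpace.single j (1:ℝ)} :=
        Finset.centerMass_mem_convexHull _ (fun j _ => hx1 j) (by rw [← hc]; exact hcpos)
          (fun j hj => ⟨j, hj, rfl⟩)
      have hcm : S.centerMass x (fun j => EuclideanSpace.single j (1:ℝ)) = c⁻¹ • x := by
        rw [Finset.centerMass, ← hc, ← hxsum]
      have hseg : x ∈ segment ℝ (0 : EuclideanSpace ℝ (Fin n))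
          (S.centerMass x (fun j => EuclideanSpace.single j (1:ℝ))) := by
        refine ⟨1 - c, c, by linarith [hx3], hc0, by ring, ?_⟩
        rw [hcm, smul_zero, zero_add, smul_smul, mul_inv_cancel₀ (ne_of_gt hcpos), one_smul]
      exact mem_convexJoin.mpr ⟨0, rfl, _, hy, hseg⟩

end Aux

/-- For the faces `F_S = conv({0} ∪ {e_i : i ∈ S})` of the standard simplex, positive reals
`μ, ν`, and `|S| = i`, the Lebesgue measure of `μ F_S + ν(−F_{Sᶜ})` equals
`μ^i ν^{n−i} / (i! (n−i)!)`. -/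
theorem volume_face_piece (n : ℕ) (hn : 1 ≤ n)
    (F : Finset (Fin n) → Set (EuclideanSpace ℝ (Fin n)))
    (hF : ∀ S, F S =
      convexHull ℝ ({0} ∪ {x | ∃ j ∈ S, x = EuclideanSpace.single j (1 : ℝ)}))
    (μ ν : ℝ) (hμ : 0 < μ) (hν : 0 < ν)
    (S : Finset (Fin n)) (i : ℕ) (hi : S.card = i) :
    volume (μ • F S + ν • (-(F Sᶜ))) =
      ENNReal.ofReal (μ ^ i * ν ^ (n - i) /
        ((Nat.factorial i : ℝ) * (Nat.factorial (n - i) : ℝ))) := by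
  classical
  have hface : ∀ T : Finset (Fin n), F T = {x : EuclideanSpace ℝ (Fin n) |
      (∀ j, 0 ≤ x j) ∧ (∀ j ∉ T, x j = 0) ∧ ∑ j ∈ T, x j ≤ 1} := by
    intro T; rw [hF T, aux_face_eq]
  -- the explicit description of the Minkowski sum
  set T0 : Set (EuclideanSpace ℝ (Fin n)) :=
    {x | (∀ j ∈ S, 0 ≤ x j) ∧ (∀ j ∉ S, x j ≤ 0) ∧
      (∑ j ∈ S, x j ≤ μ) ∧ (-ν ≤ ∑ j ∈ Sᶜ, x j)} with hT0
  have hsum : μ • F S + ν • (-(F Sᶜ)) = T0 := by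
    ext x
    constructor
    · intro hx
      rw [Set.mem_add] at hx
      obtain ⟨p, hp, q, hq, hpq⟩ := hx
      subst hpq
      rw [Set.mem_smul_set] at hp hq
      obtain ⟨a, ha, rfl⟩ := hp
      obtain ⟨b, hb, rfl⟩ := hq
      rw [Set.mem_neg, hface] at hb
      rw [hface] at ha
      obtain ⟨ha1, ha2, ha3⟩ := ha
      obtain ⟨hb1, hb2, hb3⟩ := hb
      have happ : ∀ j, (μ • a + ν • b) j = μ * a j + ν * b j := by
        intro j; simp [PiLp.add_apply, PiLp.smul_apply, smul_eq_mul]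
      have hbneg : ∀ j, b j ≤ 0 := by
        intro j; have := hb1 j; simp only [PiLp.neg_apply] at this; linarith
      have hbS : ∀ j ∈ S, b j = 0 := by
        intro j hj
        have := hb2 j (by simp [Finset.mem_compl, hj])
        simp only [PiLp.neg_apply] at this; linarith
      refine ⟨fun j hj => ?_, fun j hj => ?_, ?_, ?_⟩
      · rw [happ, hbS j hj]
        have := ha1 j; positivity
      · rw [happ, ha2 j hj]
        have := hbneg j; nlinarith
      · calc ∑ j ∈ S, (μ • a + ν • b) j = μ * ∑ j ∈ S, a j := by
              rw [Finset.sum_congr rfl fun j hj => by rw [happ, hbS j hj, mul_zero, add_zero]]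
              rw [Finset.mul_sum]
            _ ≤ μ * 1 := mul_le_mul_of_nonneg_left ha3 (le_of_lt hμ)
            _ = μ := mul_one μ
      · have hsc : ∑ j ∈ Sᶜ, (μ • a + ν • b) j = ν * ∑ j ∈ Sᶜ, b j := by
          rw [Finset.sum_congr rfl fun j hj => by
            rw [happ, ha2 j (Finset.mem_compl.mp hj), mul_zero, zero_add]]
          rw [Finset.mul_sum]
        rw [hsc]
        have h3 : -(1:ℝ) ≤ ∑ j ∈ Sᶜ, b j := by
          have : ∑ j ∈ Sᶜ, (-b) j ≤ 1 := hb3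
          simp only [PiLp.neg_apply, Finset.sum_neg_distrib] at this
          linarith
        nlinarith
    · rintro ⟨h1, h2, h3, h4⟩
      set a : EuclideanSpace ℝ (Fin n) := WithLp.toLp 2 (fun j => if j ∈ S then μ⁻¹ * x j else 0) with hadef
      set b : EuclideanSpace ℝ (Fin n) := WithLp.toLp 2 (fun j => if j ∈ S then 0 else ν⁻¹ * x j) with hbdef
      have ha : a ∈ F S := by
        rw [hface]
        refine ⟨fun j => ?_, fun j hj => by simp [hadef, hj], ?_⟩
        · by_cases hj : j ∈ S
          · simp only [hadef, if_pos hj]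
            have := h1 j hj; positivity
          · simp [hadef, hj]
        · have : ∑ j ∈ S, a j = μ⁻¹ * ∑ j ∈ S, x j := by
            rw [Finset.mul_sum]
            exact Finset.sum_congr rfl fun j hj => by simp [hadef, hj]
          rw [this]
          rw [inv_mul_le_iff₀ hμ]
          linarith
      have hb : b ∈ -(F Sᶜ) := by
        rw [Set.mem_neg, hface]
        refine ⟨fun j => ?_, fun j hj => ?_, ?_⟩
        · simp only [PiLp.neg_apply]
          by_cases hj : j ∈ S
          · simp [hbdef, hj]
          · simp only [hbdef, if_neg hj]
            have hxj := h2 j hj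
            have : ν⁻¹ * x j ≤ 0 :=
              mul_nonpos_of_nonneg_of_nonpos (le_of_lt (inv_pos.mpr hν)) hxj
            linarith
        · simp only [Finset.mem_compl, not_not] at hj
          simp [PiLp.neg_apply, hbdef, hj]
        · have : ∑ j ∈ Sᶜ, (-b) j = -(ν⁻¹ * ∑ j ∈ Sᶜ, x j) := by
            simp only [PiLp.neg_apply, Finset.sum_neg_distrib, Finset.mul_sum]
            congr 1
            exact Finset.sum_congr rfl fun j hj => by
              simp [hbdef, Finset.mem_compl.mp hj]
          rw [this]
          have hinv : 0 < ν⁻¹ := inv_pos.mpr hν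
          have hcan : ν⁻¹ * ν = 1 := inv_mul_cancel₀ (ne_of_gt hν)
          nlinarith
      refine ⟨μ • a, Set.smul_mem_smul_set ha, ν • b, Set.smul_mem_smul_set hb, ?_⟩
      ext j
      show μ * a j + ν * b j = x j
      by_cases hj : j ∈ S
      · simp [hadef, hbdef, hj, mul_inv_cancel_left₀ (ne_of_gt hμ)]
      · simp [hadef, hbdef, hj, mul_inv_cancel_left₀ (ne_of_gt hν)]
  rw [hsum, hT0]
  set A : Set ({j : Fin n // j ∈ S} → ℝ) := {y | (∀ k, 0 ≤ y k) ∧ ∑ k, y k ≤ μ} with hA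
  set A' : Set ({j : Fin n // ¬ j ∈ S} → ℝ) := {z | (∀ k, 0 ≤ z k) ∧ ∑ k, z k ≤ ν} with hA'
  set B : Set ({j : Fin n // ¬ j ∈ S} → ℝ) := {z | (∀ k, z k ≤ 0) ∧ -ν ≤ ∑ k, z k} with hBd
  have hBneg : B = -A' := by
    ext z
    simp only [hBd, hA', Set.mem_neg, Set.mem_setOf_eq, Pi.neg_apply]
    constructor
    · rintro ⟨h1, h2⟩
      refine ⟨fun k => by linarith [h1 k], ?_⟩
      rw [Finset.sum_neg_distrib]; linarith
    · rintro ⟨h1, h2⟩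
      rw [Finset.sum_neg_distrib] at h2
      exact ⟨fun k => by linarith [h1 k], by linarith⟩
  have hAm : MeasurableSet A := aux_simplex_measurable _ μ
  have hBm : MeasurableSet B := by
    rw [hBneg]
    exact (aux_simplex_measurable _ ν).neg
  have hABm : MeasurableSet (A ×ˢ B) := hAm.prod hBm
  set e2 := MeasurableEquiv.piEquivPiSubtypeProd (fun _ : Fin n => ℝ) (· ∈ S) with he2
  have hT1 : {x : Fin n → ℝ | (∀ j ∈ S, 0 ≤ x j) ∧ (∀ j ∉ S, x j ≤ 0) ∧
      (∑ j ∈ S, x j ≤ μ) ∧ (-ν ≤ ∑ j ∈ Sᶜ, x j)} = e2 ⁻¹' (A ×ˢ B) := by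
    ext x
    have hs1 : ∑ k : {j : Fin n // j ∈ S}, x k = ∑ j ∈ S, x j := by
      rw [← Finset.sum_coe_sort S x]
    have hs2 : ∑ k : {j : Fin n // ¬ j ∈ S}, x k = ∑ j ∈ Sᶜ, x j := by
      rw [Finset.sum_subtype Sᶜ (fun j => Finset.mem_compl) x]
    simp only [Set.mem_preimage, he2, MeasurableEquiv.piEquivPiSubtypeProd,
      MeasurableEquiv.coe_mk, Equiv.piEquivPiSubtypeProd, Equiv.coe_fn_mk,
      Set.mem_prod, Set.mem_setOf_eq, hA, hBd]
    constructor
    · rintro ⟨h1, h2, h3, h4⟩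
      exact ⟨⟨fun k => h1 k k.2, by rw [hs1]; exact h3⟩,
        ⟨fun k => h2 k k.2, by rw [hs2]; exact h4⟩⟩
    · rintro ⟨⟨h1, h3⟩, ⟨h2, h4⟩⟩
      exact ⟨fun j hj => h1 ⟨j, hj⟩, fun j hj => h2 ⟨j, hj⟩,
        by rw [← hs1]; exact h3, by rw [← hs2]; exact h4⟩
  have hT1m : MeasurableSet {x : Fin n → ℝ | (∀ j ∈ S, 0 ≤ x j) ∧ (∀ j ∉ S, x j ≤ 0) ∧
      (∑ j ∈ S, x j ≤ μ) ∧ (-ν ≤ ∑ j ∈ Sᶜ, x j)} := by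
    rw [hT1]; exact e2.measurable hABm
  have step1 : volume ({x : EuclideanSpace ℝ (Fin n) | (∀ j ∈ S, 0 ≤ x j) ∧ (∀ j ∉ S, x j ≤ 0) ∧
      (∑ j ∈ S, x j ≤ μ) ∧ (-ν ≤ ∑ j ∈ Sᶜ, x j)}) =
      volume {x : Fin n → ℝ | (∀ j ∈ S, 0 ≤ x j) ∧ (∀ j ∉ S, x j ≤ 0) ∧
      (∑ j ∈ S, x j ≤ μ) ∧ (-ν ≤ ∑ j ∈ Sᶜ, x j)} := by
    rw [← (EuclideanSpace.volume_preserving_symm_measurableEquiv_toLp (ι := Fin n)).measure_preimage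
      hT1m.nullMeasurableSet]
    rfl
  rw [step1, hT1,
    (volume_preserving_piEquivPiSubtypeProd (fun _ : Fin n => ℝ) (· ∈ S)).measure_preimage
      hABm.nullMeasurableSet,
    Measure.volume_eq_prod, Measure.prod_prod]
  have hcardA : Fintype.card {j : Fin n // j ∈ S} = i := by
    rw [Fintype.card_coe, hi]
  have hcardB : Fintype.card {j : Fin n // ¬ j ∈ S} = n - i := by
    rw [Fintype.card_subtype_compl, Fintype.card_coe, hi, Fintype.card_fin]
  have hvA : volume A = ENNReal.ofReal (μ ^ i / i.factorial) := by
    rw [hA, aux_simplex_volume _ μ hμ.le, hcardA]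
  have hvB : volume B = ENNReal.ofReal (ν ^ (n - i) / (n - i).factorial) := by
    rw [hBneg, Measure.measure_neg, hA', aux_simplex_volume _ ν hν.le, hcardB]
  have hfin : ENNReal.ofReal (μ ^ i / ↑i.factorial) * ENNReal.ofReal (ν ^ (n - i) / ↑(n - i).factorial)
      = ENNReal.ofReal (μ ^ i * ν ^ (n - i) /
        ((Nat.factorial i : ℝ) * (Nat.factorial (n - i) : ℝ))) := by
    rw [← ENNReal.ofReal_mul (by positivity)]
    congr 1
    field_simp
  rw [← hfin]
  convert congrArg₂ (· * ·) hvA hvB using 2 <;> congr!
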